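/- Assume mass conservation: ∫_X ℓ_i(x, y) dx = 0 for every status i and almost every y ∈ X. Then for all M, N ∈ M_{n_a} the matrix representation L̂ of the Galerkin projection QLQ, with entries L̂_{NM} = ⟨Φ_M, L Φ_N⟩ / ⟨Φ_N, 𝟙⟩, is given by: L̂_{NM} = λ_i^{(kl)} N_i^{(k)} if M = N + E_i^{(l)} − E_i^{(k)} for some status i and subset indices k ≠ l; L̂_{NN} = −∑_{i=1}^{n_s} ∑_{k,l=1, l≠k}^m λ_i^{(kl)} N_i^{(k)}; and L̂_{NM} = 0 in all other cases. -/

import Mathlib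

open MeasureTheory Finset Function

namespace ABMFormal

abbrev E (d : ℕ) : Type := EuclideanSpace ℝ (Fin d)
abbrev FS (d n_s n_a : ℕ) : Type := (Fin n_a → E d) → (Fin n_a → Fin n_s) → ℝ

noncomputable def occ {d m n_s n_a : ℕ} (A : Fin m → Set (E d)) (X : Fin n_a → E d)
    (S : Fin n_a → Fin n_s) (i : Fin n_s) (k : Fin m) : ℕ :=
  Set.ncard {α : Fin n_a | X α ∈ A k ∧ S α = i}

noncomputable def Phi {d m n_s n_a : ℕ} (A : Fin m → Set (E d)) (N : Fin n_s → Fin m → ℤ)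
    (X : Fin n_a → E d) (S : Fin n_a → Fin n_s) : ℝ :=
  if ∀ i k, ((occ A X S i k : ℕ) : ℤ) = N i k then 1 else 0

noncomputable def Mset (n_s m n_a : ℕ) : Finset (Fin n_s → Fin m → ℤ) :=
  ((Finset.univ : Finset (Fin n_s → Fin m → Fin (n_a + 1))).image
      fun f i k => ((f i k : ℕ) : ℤ)).filter
    fun N => (∑ i, ∑ k, N i k) = (n_a : ℤ)

def posSet {d : ℕ} (Xdom : Set (E d)) (n_a : ℕ) : Set (Fin n_a → E d) :=
  Set.univ.pi fun _ => Xdom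

noncomputable def ip {d n_s n_a : ℕ} (Xdom : Set (E d)) (f g : FS d n_s n_a) : ℝ :=
  (((volume Xdom).toReal * (n_s : ℝ)) ^ n_a)⁻¹ *
    ∑ S : Fin n_a → Fin n_s, ∫ X in posSet Xdom n_a, f X S * g X S

def one (d n_s n_a : ℕ) : FS d n_s n_a := fun _ _ => 1

def Emat {n_s m : ℕ} (i : Fin n_s) (k : Fin m) : Fin n_s → Fin m → ℤ :=
  fun i' k' => if i' = i ∧ k' = k then 1 else 0

def deltaS {n_s : ℕ} (i s : Fin n_s) : ℝ := if s = i then 1 else 0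

noncomputable def deltaA {d : ℕ} (A : Set (E d)) (x : E d) : ℝ :=
  A.indicator (fun _ => (1 : ℝ)) x

noncomputable def dr {d : ℕ} (r : ℝ) (x y : E d) : ℝ := if dist x y ≤ r then 1 else 0

/-- Transition rates `λ_i^{(kl)} = (∫_{A_l} ∫_{A_k} ℓ_i(x,y) dy dx) / μ(A_k)`. -/
noncomputable def lam {d m n_s : ℕ} (A : Fin m → Set (E d)) (K : Fin n_s → E d → E d → ℝ)
    (i : Fin n_s) (k l : Fin m) : ℝ :=
  (∫ x in A l, ∫ y in A k, K i x y) / (volume (A k)).toReal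

/-- The movement generator `(L p)(X, S) = ∑_α ∫_X ℓ_{s_α}(x_α, y) p(X^{α→y}, S) dy`. -/
noncomputable def Lop {d n_s n_a : ℕ} (Xdom : Set (E d)) (K : Fin n_s → E d → E d → ℝ)
    (p : FS d n_s n_a) : FS d n_s n_a :=
  fun X S => ∑ α, ∫ y in Xdom, K (S α) (X α) y * p (Function.update X α y) S

/-- `γ_{ij}^{(k)} = (∫_{A_k} γ_{ij}(x) dx) / μ(A_k)`. -/
noncomputable def gammaK {d m n_s : ℕ} (A : Fin m → Set (E d)) (γ : Fin n_s → Fin n_s → E d → ℝ)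
    (i j : Fin n_s) (k : Fin m) : ℝ :=
  (∫ x in A k, γ i j x) / (volume (A k)).toReal

/-- First-order adoption rate function `f_{ij}^{(α)}(X,S) = δ_i(s_α) γ_{ij}(x_α)`. -/
noncomputable def fFirst {d n_s n_a : ℕ} (γ : Fin n_s → Fin n_s → E d → ℝ) (i j : Fin n_s)
    (α : Fin n_a) (X : Fin n_a → E d) (S : Fin n_a → Fin n_s) : ℝ :=
  deltaS i (S α) * γ i j (X α)

/-- Outflow part `G₁ p = (∑_{i,j,α} f_{ij}^{(α)}) p` of the first-order adoption generator. -/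
noncomputable def G1First {d n_s n_a : ℕ} (γ : Fin n_s → Fin n_s → E d → ℝ)
    (p : FS d n_s n_a) : FS d n_s n_a :=
  fun X S => (∑ i, ∑ j, ∑ α, fFirst γ i j α X S) * p X S

/-- Inflow part `G₂ p (X,S) = ∑_{i,j,α} f_{ij}^{(α)}(X, S + i e_α − j e_α) p(X, S + i e_α − j e_α)`
of the first-order adoption generator.  Since in coordinatewise integer arithmetic
`δ_i(s_α + i − j) = δ_j(s_α)`, and then `S + i e_α − j e_α = Function.update S α i` lies in
`S^{n_a}`, while all other summands vanish by the extension-by-zero convention, the term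
equals `∑_{i,j,α} δ_j(s_α) γ_{ij}(x_α) p(X, update S α i)`. -/
noncomputable def G2First {d n_s n_a : ℕ} (γ : Fin n_s → Fin n_s → E d → ℝ)
    (p : FS d n_s n_a) : FS d n_s n_a :=
  fun X S => ∑ i, ∑ j, ∑ α, deltaS j (S α) * γ i j (X α) * p X (Function.update S α i)

/-- The first-order adoption generator `G = −G₁ + G₂`. -/
noncomputable def GopFirst {d n_s n_a : ℕ} (γ : Fin n_s → Fin n_s → E d → ℝ)
    (p : FS d n_s n_a) : FS d n_s n_a :=
  fun X S => -(G1First γ p X S) + G2First γ p X S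

/-- Second-order adoption rate function
`f_{ij}^{(α)}(X,S) = δ_i(s_α) ∑_{β ≠ α} δ_j(s_β) c_{ij} d_r(x_α, x_β)`. -/
noncomputable def fSecond {d n_s n_a : ℕ} (c : Fin n_s → Fin n_s → ℝ) (r : ℝ)
    (i j : Fin n_s) (α : Fin n_a) (X : Fin n_a → E d) (S : Fin n_a → Fin n_s) : ℝ :=
  deltaS i (S α) * ∑ β ∈ Finset.univ.erase α, deltaS j (S β) * (c i j * dr r (X α) (X β))

/-- Outflow part `G₁ p = (∑_{i,j,α} f_{ij}^{(α)}) p` of the second-order adoption generator. -/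
noncomputable def G1Second {d n_s n_a : ℕ} (c : Fin n_s → Fin n_s → ℝ) (r : ℝ)
    (p : FS d n_s n_a) : FS d n_s n_a :=
  fun X S => (∑ i, ∑ j, ∑ α, fSecond c r i j α X S) * p X S

/-- Inflow part of the second-order adoption generator, the term
`∑_{i,j,α} f_{ij}^{(α)}(X, S + i e_α − j e_α) p(X, S + i e_α − j e_α)`; as in the
first-order case the only non-vanishing summands are those with `s_α = j`, giving
`∑_{i,j,α} δ_j(s_α) (∑_{β ≠ α} δ_j(s_β) c_{ij} d_r(x_α,x_β)) p(X, update S α i)`. -/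
noncomputable def G2Second {d n_s n_a : ℕ} (c : Fin n_s → Fin n_s → ℝ) (r : ℝ)
    (p : FS d n_s n_a) : FS d n_s n_a :=
  fun X S => ∑ i, ∑ j, ∑ α, deltaS j (S α) *
    (∑ β ∈ Finset.univ.erase α, deltaS j (S β) * (c i j * dr r (X α) (X β))) *
    p X (Function.update S α i)

/-- The second-order adoption generator `G = −G₁ + G₂`. -/
noncomputable def GopSecond {d n_s n_a : ℕ} (c : Fin n_s → Fin n_s → ℝ) (r : ℝ)
    (p : FS d n_s n_a) : FS d n_s n_a :=
  fun X S => -(G1Second c r p X S) + G2Second c r p X S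

/-- `b_{kl} = (∫_{A_k} ∫_{A_l} d_r(x₁,x₂) dx₂ dx₁)/(μ(A_k) μ(A_l))`. -/
noncomputable def bOf {d m : ℕ} (A : Fin m → Set (E d)) (r : ℝ) (k l : Fin m) : ℝ :=
  (∫ x in A k, ∫ y in A l, dr r x y) / ((volume (A k)).toReal * (volume (A l)).toReal)

/-- The normalized ansatz functions `Φ̂_N = Φ_N / ⟨Φ_N, 𝟙⟩`. -/
noncomputable def Phihat {d m n_s n_a : ℕ} (Xdom : Set (E d)) (A : Fin m → Set (E d))
    (N : Fin n_s → Fin m → ℤ) : FS d n_s n_a :=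
  fun X S => Phi A N X S / ip Xdom (Phi (n_a := n_a) A N) (one d n_s n_a)

/-- The Galerkin projection `Q v = ∑_{N ∈ M_{n_a}} (⟨Φ_N, v⟩/⟨Φ_N, 𝟙⟩) Φ_N`. -/
noncomputable def Qproj {d m n_s n_a : ℕ} (Xdom : Set (E d)) (A : Fin m → Set (E d))
    (v : FS d n_s n_a) : FS d n_s n_a :=
  fun X S => ∑ N ∈ Mset n_s m n_a,
    (ip Xdom (Phi (n_a := n_a) A N) v / ip Xdom (Phi (n_a := n_a) A N) (one d n_s n_a)) *
      Phi A N X S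

/-- The matrix representation `Ĥ_{NM} = ⟨Φ_M, H Φ_N⟩ / ⟨Φ_N, 𝟙⟩` of a projected operator. -/
noncomputable def Hhat {d m n_s n_a : ℕ} (Xdom : Set (E d)) (A : Fin m → Set (E d))
    (H : FS d n_s n_a →ₗ[ℝ] FS d n_s n_a) (N M : Fin n_s → Fin m → ℤ) : ℝ :=
  ip Xdom (Phi (n_a := n_a) A M) (H (Phi A N)) / ip Xdom (Phi (n_a := n_a) A N) (one d n_s n_a)

section AuxComb
variable {m n_s n_a : ℕ}

def cnt (c : Fin n_a → Fin m) (S : Fin n_a → Fin n_s) (i : Fin n_s) (k : Fin m) : ℕ :=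
  (Finset.univ.filter fun α => c α = k ∧ S α = i).card

def cntZ (c : Fin n_a → Fin m) (S : Fin n_a → Fin n_s) : Fin n_s → Fin m → ℤ :=
  fun i k => (cnt c S i k : ℤ)

lemma cntZ_apply (c : Fin n_a → Fin m) (S : Fin n_a → Fin n_s) (i : Fin n_s) (k : Fin m) :
    cntZ c S i k = ∑ α : Fin n_a, if c α = k ∧ S α = i then (1 : ℤ) else 0 := by
  rw [cntZ, cnt, Finset.card_filter, Nat.cast_sum]
  push_cast
  rfl

lemma cntZ_update (c : Fin n_a → Fin m) (S : Fin n_a → Fin n_s) (α : Fin n_a) (k' : Fin m) :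
    cntZ (Function.update c α k') S = cntZ c S - Emat (S α) (c α) + Emat (S α) k' := by
  funext i k
  simp only [Pi.add_apply, Pi.sub_apply, cntZ_apply, Emat]
  have hfun : (fun β => if Function.update c α k' β = k ∧ S β = i then (1:ℤ) else 0)
      = Function.update (fun β => if c β = k ∧ S β = i then (1:ℤ) else 0) α
          (if k' = k ∧ S α = i then 1 else 0) := by
    funext β
    rcases eq_or_ne β α with rfl | hβ
    · simp
    · rw [Function.update_of_ne hβ, Function.update_of_ne hβ]
  rw [hfun, Finset.sum_update_of_mem (Finset.mem_univ α),
    ← Finset.add_sum_erase _ (fun β => if c β = k ∧ S β = i then (1:ℤ) else 0) (Finset.mem_univ α)]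
  have h1 : ((k' = k ∧ S α = i) ↔ (i = S α ∧ k = k')) := by
    constructor <;> rintro ⟨h, h'⟩ <;> exact ⟨h'.symm, h.symm⟩
  have h2 : ((c α = k ∧ S α = i) ↔ (i = S α ∧ k = c α)) := by
    constructor <;> rintro ⟨h, h'⟩ <;> exact ⟨h'.symm, h.symm⟩
  rw [if_congr h1 rfl rfl, if_congr h2 rfl rfl]
  simp only [Finset.erase_eq]
  ring

lemma Emat_sub_eq_iff {i' i : Fin n_s} {a b k l : Fin m} (hkl : k ≠ l) :
    ((Emat i' b - Emat i' a : Fin n_s → Fin m → ℤ) = Emat i l - Emat i k) ↔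
      (i' = i ∧ b = l ∧ a = k) := by
  constructor
  · intro h
    have hil := congr_fun (congr_fun h i) l
    have hik := congr_fun (congr_fun h i) k
    simp only [Pi.sub_apply, Emat] at hil hik
    have hlk : ¬ (l = k) := fun h => hkl h.symm
    simp only [and_self, if_true, eq_self_iff_true, true_and, hlk, if_false, sub_zero] at hil hik
    have hA : (i = i' ∧ l = b) := by
      by_contra hc
      rw [if_neg hc] at hil
      split_ifs at hil <;> omega
    have hD : (i = i' ∧ k = a) := by
      by_contra hc
      rw [if_neg hc] at hik
      split_ifs at hik <;> omega
    exact ⟨hA.1.symm, hA.2.symm, hD.2.symm⟩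
  · rintro ⟨rfl, rfl, rfl⟩; rfl

lemma Emat_eq_iff {i' : Fin n_s} {a b : Fin m} :
    (Emat i' b : Fin n_s → Fin m → ℤ) = Emat i' a ↔ b = a := by
  constructor
  · intro h
    have h2 := congr_fun (congr_fun h i') b
    have h3 : (1 : ℤ) = if i' = i' ∧ b = a then 1 else 0 := by simpa [Emat] using h2
    by_contra hba
    rw [if_neg (by tauto)] at h3
    exact one_ne_zero h3
  · rintro rfl; rfl

end AuxComb

section AuxCell
variable {d m n_s n_a : ℕ} {A : Fin m → Set (E d)}

open Classical in
noncomputable def cell [Nonempty (Fin m)] (A : Fin m → Set (E d)) (x : E d) : Fin m :=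
  if h : ∃ k, x ∈ A k then h.choose else Classical.arbitrary _

lemma cell_mem [Nonempty (Fin m)] {x : E d} (h : ∃ k, x ∈ A k) : x ∈ A (cell A x) := by
  classical
  rw [cell]
  rw [dif_pos h]
  exact h.choose_spec

lemma mem_iff_cell [Nonempty (Fin m)] (hAdisj : Pairwise (Disjoint on A)) {x : E d} (h : ∃ k, x ∈ A k) (k : Fin m) :
    x ∈ A k ↔ cell A x = k := by
  constructor
  · intro hx
    by_contra hne
    exact (hAdisj hne).le_bot ⟨cell_mem h, hx⟩
  · rintro rfl; exact cell_mem h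

lemma occ_eq_cnt [Nonempty (Fin m)] (hAdisj : Pairwise (Disjoint on A)) {X : Fin n_a → E d}
    (hX : ∀ β, ∃ k, X β ∈ A k) (S : Fin n_a → Fin n_s) (i : Fin n_s) (k : Fin m) :
    occ A X S i k = cnt (fun β => cell A (X β)) S i k := by
  rw [occ, cnt]
  classical
  rw [← Set.ncard_coe_finset]
  congr 1
  ext α
  simp only [Finset.coe_filter, Set.mem_setOf_eq, Finset.mem_univ, true_and]
  rw [mem_iff_cell hAdisj (hX α)]

end AuxCell

section AuxPointwise
variable {d m n_s n_a : ℕ} {A : Fin m → Set (E d)} [Nonempty (Fin m)]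

lemma Phi_eq_cnt (hAdisj : Pairwise (Disjoint on A)) {X : Fin n_a → E d}
    (hX : ∀ β, ∃ k, X β ∈ A k) (N : Fin n_s → Fin m → ℤ) (S : Fin n_a → Fin n_s) :
    Phi A N X S = if cntZ (fun β => cell A (X β)) S = N then 1 else 0 := by
  rw [Phi]
  congr 1
  rw [eq_iff_iff]
  rw [funext_iff]
  constructor
  · intro h i
    funext k
    rw [cntZ, ← occ_eq_cnt hAdisj hX]
    exact h i k
  · intro h i k
    have := congr_fun (h i) k
    rw [cntZ, ← occ_eq_cnt hAdisj hX] at this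
    exact this

lemma prod_indA (hAdisj : Pairwise (Disjoint on A)) {X : Fin n_a → E d}
    (hX : ∀ β, ∃ k, X β ∈ A k) (c : Fin n_a → Fin m) :
    (∏ β, (A (c β)).indicator (fun _ => (1:ℝ)) (X β))
      = if c = (fun β => cell A (X β)) then 1 else 0 := by
  split_ifs with hc
  · subst hc
    apply Finset.prod_eq_one
    intro β _
    rw [Set.indicator_of_mem (cell_mem (hX β))]
  · obtain ⟨β, hβ⟩ : ∃ β, c β ≠ cell A (X β) := by
      by_contra hall
      push_neg at hall
      exact hc (funext hall)
    apply Finset.prod_eq_zero (Finset.mem_univ β)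
    rw [Set.indicator_of_notMem]
    intro hmem
    exact hβ ((mem_iff_cell hAdisj (hX β) _).mp hmem).symm

lemma exists_cnt {N : Fin n_s → Fin m → ℤ} (hN : N ∈ Mset n_s m n_a) :
    ∃ (S : Fin n_a → Fin n_s) (c : Fin n_a → Fin m), cntZ c S = N := by
  classical
  rw [Mset, Finset.mem_filter, Finset.mem_image] at hN
  obtain ⟨⟨f, -, hf⟩, hsum⟩ := hN
  set g : Fin n_s × Fin m → ℕ := fun p => (f p.1 p.2 : ℕ) with hg
  have hcard : Fintype.card (Σ p : Fin n_s × Fin m, Fin (g p)) = n_a := by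
    rw [Fintype.card_sigma]
    simp only [Fintype.card_fin]
    have : ((∑ p : Fin n_s × Fin m, g p : ℕ) : ℤ) = (n_a : ℤ) := by
      rw [Nat.cast_sum, Fintype.sum_prod_type]
      rw [← hsum]
      rw [← hf]
    exact_mod_cast this
  set e : (Σ p : Fin n_s × Fin m, Fin (g p)) ≃ Fin n_a := Fintype.equivFinOfCardEq hcard with he
  refine ⟨fun α => ((e.symm α).1).1, fun α => ((e.symm α).1).2, ?_⟩
  funext i k
  rw [← hf]
  rw [cntZ_apply]
  have := (Equiv.sum_comp e (fun α => if ((e.symm α).1).2 = k ∧ ((e.symm α).1).1 = i then (1:ℤ) else 0)).symm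
  rw [this]
  simp only [Equiv.symm_apply_apply]
  rw [← Finset.univ_sigma_univ, Finset.sum_sigma]
  have hstep : ∀ p : Fin n_s × Fin m,
      (∑ _x : Fin (g p), if p.2 = k ∧ p.1 = i then (1:ℤ) else 0)
        = if p = (i, k) then (g p : ℤ) else 0 := by
    intro p
    rw [Finset.sum_const, Finset.card_univ, Fintype.card_fin, nsmul_eq_mul, mul_ite, mul_one,
      mul_zero]
    refine if_congr ?_ rfl rfl
    rw [Prod.ext_iff]
    constructor
    · rintro ⟨h1, h2⟩; exact ⟨h2, h1⟩
    · rintro ⟨h1, h2⟩; exact ⟨h2, h1⟩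
  rw [Finset.sum_congr rfl fun p _ => hstep p]
  rw [Finset.sum_ite_eq' Finset.univ (i, k) (fun p => (g p : ℤ)), if_pos (Finset.mem_univ _)]

end AuxPointwise


section AuxAnalysis
variable {d m n_s n_a : ℕ}

lemma integrable_indA {Xdom s : Set (E d)} (hXcomp : IsCompact Xdom)
    (hmeas : MeasurableSet s) (hsub : s ⊆ Xdom) :
    Integrable (s.indicator fun _ => (1:ℝ)) := by
  rw [integrable_indicator_iff hmeas]
  exact (integrableOn_const_iff (C := (1:ℝ))).mpr (Or.inr (lt_of_le_of_lt (measure_mono hsub)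
    hXcomp.measure_lt_top))

lemma integral_indA {s : Set (E d)} (hmeas : MeasurableSet s) :
    ∫ x, s.indicator (fun _ => (1:ℝ)) x = (volume s).toReal := by
  rw [integral_indicator_const (1:ℝ) hmeas, smul_eq_mul, mul_one, measureReal_def]

lemma integrableOn_inner {Xdom : Set (E d)} {K : E d → E d → ℝ}
    (hKint : IntegrableOn (fun q : E d × E d => K q.1 q.2) (Xdom ×ˢ Xdom))
    {s : Set (E d)} (hsub : s ⊆ Xdom) :
    IntegrableOn (fun x => ∫ y in s, K x y) Xdom := by
  have h1 : IntegrableOn (fun q : E d × E d => K q.1 q.2) (Xdom ×ˢ s) :=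
    hKint.mono_set (Set.prod_mono subset_rfl hsub)
  rw [IntegrableOn, Measure.volume_eq_prod, ← Measure.prod_restrict] at h1
  exact h1.integral_prod_left

lemma sum_intAA_eq_zero {Xdom : Set (E d)} {K : E d → E d → ℝ}
    (A : Fin m → Set (E d)) (hAmeas : ∀ k, MeasurableSet (A k))
    (hAdisj : Pairwise (Disjoint on A)) (hAcover : (⋃ k, A k) = Xdom)
    (hKint : IntegrableOn (fun q : E d × E d => K q.1 q.2) (Xdom ×ˢ Xdom))
    (hmass : ∀ᵐ y ∂(volume.restrict Xdom), ∫ x in Xdom, K x y = 0) (k : Fin m) :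
    ∑ l, ∫ x in A l, ∫ y in A k, K x y = 0 := by
  have hsub : ∀ l, A l ⊆ Xdom := fun l => hAcover ▸ Set.subset_iUnion A l
  have hInt : IntegrableOn (fun x => ∫ y in A k, K x y) Xdom := integrableOn_inner hKint (hsub k)
  have hU : ∫ x in Xdom, (∫ y in A k, K x y) = ∑ l, ∫ x in A l, ∫ y in A k, K x y := by
    rw [← hAcover]
    have : (⋃ l, A l) = ⋃ l ∈ (Finset.univ : Finset (Fin m)), A l := by simp
    rw [this, integral_biUnion_finset Finset.univ (fun l _ => hAmeas l)
      (fun a _ b _ hab => hAdisj hab) (fun l _ => hInt.mono_set (hsub l))]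
  have hIntProd : Integrable (Function.uncurry fun x y => K x y)
      ((volume.restrict Xdom).prod (volume.restrict (A k))) := by
    have h1 : IntegrableOn (fun q : E d × E d => K q.1 q.2) (Xdom ×ˢ A k) :=
      hKint.mono_set (Set.prod_mono subset_rfl (hsub k))
    rw [IntegrableOn, Measure.volume_eq_prod, ← Measure.prod_restrict] at h1
    exact h1
  have hswap : ∫ x in Xdom, ∫ y in A k, K x y = ∫ y in A k, ∫ x in Xdom, K x y :=
    integral_integral_swap hIntProd
  have hzero : ∫ y in A k, ∫ x in Xdom, K x y = 0 := by
    apply integral_eq_zero_of_ae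
    exact ae_mono (Measure.restrict_mono (hsub k) le_rfl) hmass
  rw [← hU, hswap, hzero]

end AuxAnalysis


section AuxMain
variable {d m n_s n_a : ℕ}

lemma den_integral [Nonempty (Fin m)] {Xdom : Set (E d)} (hXcomp : IsCompact Xdom)
    {A : Fin m → Set (E d)} (hAmeas : ∀ k, MeasurableSet (A k))
    (hAdisj : Pairwise (Disjoint on A)) (hAcover : (⋃ k, A k) = Xdom)
    (N : Fin n_s → Fin m → ℤ) (S : Fin n_a → Fin n_s) :
    ∫ X in posSet Xdom n_a, Phi A N X S * one d n_s n_a X S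
      = ∑ c : Fin n_a → Fin m,
          (if cntZ c S = N then (1:ℝ) else 0) * ∏ β, (volume (A (c β))).toReal := by
  classical
  have hsub : ∀ k, A k ⊆ Xdom := fun k => hAcover ▸ Set.subset_iUnion A k
  have hXmeas : MeasurableSet Xdom := hXcomp.measurableSet
  have hpos_meas : MeasurableSet (posSet Xdom n_a) := MeasurableSet.univ_pi fun _ => hXmeas
  simp only [one, mul_one]
  rw [← integral_indicator hpos_meas]
  have heq : (posSet Xdom n_a).indicator (fun X => Phi A N X S)
      = fun X => ∑ c : Fin n_a → Fin m, (if cntZ c S = N then (1:ℝ) else 0) *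
          ∏ β, (A (c β)).indicator (fun _ => (1:ℝ)) (X β) := by
    funext X
    by_cases hX : X ∈ posSet Xdom n_a
    · rw [Set.indicator_of_mem hX]
      have hXk : ∀ β, ∃ k, X β ∈ A k := by
        intro β
        have hb : X β ∈ Xdom := hX β (Set.mem_univ β)
        rw [← hAcover] at hb
        exact Set.mem_iUnion.mp hb
      rw [Phi_eq_cnt hAdisj hXk]
      rw [Finset.sum_congr rfl (fun c _ => by rw [prod_indA hAdisj hXk c])]
      simp only [mul_ite, mul_one, mul_zero]
      rw [Finset.sum_ite_eq' Finset.univ (fun β => cell A (X β))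
        (fun c => if cntZ c S = N then (1:ℝ) else 0), if_pos (Finset.mem_univ _)]
    · rw [Set.indicator_of_notMem hX]
      obtain ⟨β, hβ⟩ : ∃ β, X β ∉ Xdom := by
        by_contra hall
        push_neg at hall
        exact hX fun β _ => hall β
      symm
      apply Finset.sum_eq_zero
      intro c _
      rw [Finset.prod_eq_zero (Finset.mem_univ β) (Set.indicator_of_notMem
        (fun hmem => hβ (hsub (c β) hmem)) _), mul_zero]
  rw [heq]
  rw [integral_finset_sum]
  · refine Finset.sum_congr rfl fun c _ => ?_
    rw [integral_const_mul, integral_fintype_prod_volume_eq_prod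
      (fun β x => (A (c β)).indicator (fun _ => (1:ℝ)) x)]
    congr 1
    exact Finset.prod_congr rfl fun β _ => integral_indA (hAmeas (c β))
  · intro c _
    exact (Integrable.fintype_prod (f := fun β x => (A (c β)).indicator (fun _ => (1:ℝ)) x)
      (fun β => integrable_indA hXcomp (hAmeas (c β)) (hsub (c β)))).const_mul _

end AuxMain


section AuxNum
variable {d m n_s n_a : ℕ}

lemma ae_pi_coord {Xdom : Set (E d)} (hXmeas : MeasurableSet Xdom) {P : E d → Prop}
    (hP : ∀ᵐ x ∂(volume.restrict Xdom), P x) (α : Fin n_a) :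
    ∀ᵐ X : (Fin n_a → E d) ∂volume, X α ∈ Xdom → P (X α) := by
  have hB : volume ({x | ¬ P x} ∩ Xdom) = 0 := by
    have := ae_iff.mp hP
    rwa [Measure.restrict_apply' hXmeas] at this
  rw [ae_iff]
  refine measure_mono_null (fun X hX => ?_) (t := Set.pi Set.univ
    (fun β => if β = α then toMeasurable volume ({x | ¬ P x} ∩ Xdom) else Set.univ)) ?_
  · simp only [Set.mem_setOf_eq, _root_.not_imp] at hX
    intro β _
    simp only []
    rcases eq_or_ne β α with rfl | hβ
    · rw [if_pos rfl]
      exact subset_toMeasurable _ _ ⟨hX.2, hX.1⟩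
    · rw [if_neg hβ]; trivial
  · rw [MeasureTheory.volume_pi_pi]
    apply Finset.prod_eq_zero (Finset.mem_univ α)
    rw [if_pos rfl, measure_toMeasurable, hB]

/-- the auxiliary factor functions for the numerator integrand -/
noncomputable def Fc (A : Fin m → Set (E d)) (K : Fin n_s → E d → E d → ℝ)
    (S : Fin n_a → Fin n_s) (α : Fin n_a) (c : Fin n_a → Fin m) (k : Fin m)
    (β : Fin n_a) (x : E d) : ℝ :=
  (A (c β)).indicator (fun _ => (1:ℝ)) x * (if β = α then (∫ y in A k, K (S α) x y) else 1)

lemma Fc_of_ne {A : Fin m → Set (E d)} {K : Fin n_s → E d → E d → ℝ}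
    {S : Fin n_a → Fin n_s} {α β : Fin n_a} {c : Fin n_a → Fin m} {k : Fin m} (hβ : β ≠ α) :
    Fc A K S α c k β = (A (c β)).indicator (fun _ => (1:ℝ)) := by
  funext x; rw [Fc, if_neg hβ, mul_one]

lemma Fc_self {A : Fin m → Set (E d)} {K : Fin n_s → E d → E d → ℝ}
    {S : Fin n_a → Fin n_s} {α : Fin n_a} {c : Fin n_a → Fin m} {k : Fin m} :
    Fc A K S α c k α = (A (c α)).indicator (fun x => ∫ y in A k, K (S α) x y) := by
  funext x
  rw [Fc, if_pos rfl]
  by_cases hx : x ∈ A (c α)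
  · rw [Set.indicator_of_mem hx, Set.indicator_of_mem hx, one_mul]
  · rw [Set.indicator_of_notMem hx, Set.indicator_of_notMem hx, zero_mul]

lemma prod_Fc [Nonempty (Fin m)] {A : Fin m → Set (E d)} {K : Fin n_s → E d → E d → ℝ}
    {S : Fin n_a → Fin n_s} (hAdisj : Pairwise (Disjoint on A)) {X : Fin n_a → E d}
    (hXk : ∀ β, ∃ k, X β ∈ A k) (α : Fin n_a) (c : Fin n_a → Fin m) (k : Fin m) :
    ∏ β, Fc A K S α c k β (X β)
      = (if c = (fun β => cell A (X β)) then (1:ℝ) else 0) *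
          ∫ y in A k, K (S α) (X α) y := by
  simp only [Fc]
  rw [Finset.prod_mul_distrib]
  rw [prod_indA hAdisj hXk c]
  rw [Finset.prod_ite_eq' Finset.univ α (fun β => ∫ y in A k, K (S α) (X β) y),
    if_pos (Finset.mem_univ α)]

lemma integrable_Fc {Xdom : Set (E d)} (hXcomp : IsCompact Xdom)
    {A : Fin m → Set (E d)} (hAmeas : ∀ k, MeasurableSet (A k))
    (hsub : ∀ k, A k ⊆ Xdom) {K : Fin n_s → E d → E d → ℝ}
    (hKint : ∀ i, IntegrableOn (fun q : E d × E d => K i q.1 q.2) (Xdom ×ˢ Xdom))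
    (S : Fin n_a → Fin n_s) (α : Fin n_a) (c : Fin n_a → Fin m) (k : Fin m) (β : Fin n_a) :
    Integrable (Fc A K S α c k β) := by
  rcases eq_or_ne β α with rfl | hβ
  · rw [Fc_self]
    rw [integrable_indicator_iff (hAmeas (c β))]
    exact (integrableOn_inner (hKint (S β)) (hsub k)).mono_set (hsub (c β))
  · rw [Fc_of_ne hβ]
    exact integrable_indA hXcomp (hAmeas (c β)) (hsub (c β))

end AuxNum


section AuxNum2
variable {d m n_s n_a : ℕ}

lemma num_integral [Nonempty (Fin m)] {Xdom : Set (E d)} (hXcomp : IsCompact Xdom)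
    {A : Fin m → Set (E d)} (hAmeas : ∀ k, MeasurableSet (A k))
    (hAdisj : Pairwise (Disjoint on A)) (hAcover : (⋃ k, A k) = Xdom)
    {K : Fin n_s → E d → E d → ℝ}
    (hKint : ∀ i, IntegrableOn (fun q : E d × E d => K i q.1 q.2) (Xdom ×ˢ Xdom))
    (M N : Fin n_s → Fin m → ℤ) (S : Fin n_a → Fin n_s) :
    ∫ X in posSet Xdom n_a, Phi A M X S * Lop Xdom K (Phi A N) X S
      = ∑ α : Fin n_a, ∑ c : Fin n_a → Fin m, ∑ k : Fin m,
          (if cntZ c S = M then (1:ℝ) else 0) *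
            ((if cntZ (Function.update c α k) S = N then (1:ℝ) else 0) *
              ((∏ β ∈ Finset.univ.erase α, (volume (A (c β))).toReal) *
                ∫ x in A (c α), ∫ y in A k, K (S α) x y)) := by
  classical
  have hsub : ∀ k, A k ⊆ Xdom := fun k => hAcover ▸ Set.subset_iUnion A k
  have hXmeas : MeasurableSet Xdom := hXcomp.measurableSet
  have hpos_meas : MeasurableSet (posSet Xdom n_a) := MeasurableSet.univ_pi fun _ => hXmeas
  rw [← integral_indicator hpos_meas]
  -- the a.e. integrability of slices
  have hae : ∀ᵐ X : (Fin n_a → E d) ∂volume, ∀ (α : Fin n_a) (i : Fin n_s),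
      X α ∈ Xdom → Integrable (fun y => K i (X α) y) (volume.restrict Xdom) := by
    rw [ae_all_iff]
    intro α
    rw [ae_all_iff]
    intro i
    apply ae_pi_coord hXmeas (P := fun x => Integrable (fun y => K i x y) (volume.restrict Xdom))
    have h1 := hKint i
    rw [IntegrableOn, Measure.volume_eq_prod, ← Measure.prod_restrict] at h1
    exact h1.prod_right_ae
  -- Step A : a.e. rewrite of the integrand
  have hcong : ∫ X, (posSet Xdom n_a).indicator
        (fun X => Phi A M X S * Lop Xdom K (Phi A N) X S) X
      = ∫ X : Fin n_a → E d, ∑ α : Fin n_a, ∑ c : Fin n_a → Fin m, ∑ k : Fin m,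
          (if cntZ c S = M then (1:ℝ) else 0) *
            ((if cntZ (Function.update c α k) S = N then (1:ℝ) else 0) *
              ∏ β, Fc A K S α c k β (X β)) := by
    apply integral_congr_ae
    filter_upwards [hae] with X hX
    by_cases hXmem : X ∈ posSet Xdom n_a
    · rw [Set.indicator_of_mem hXmem]
      have hXdom : ∀ β, X β ∈ Xdom := fun β => hXmem β (Set.mem_univ β)
      have hXk : ∀ β, ∃ k, X β ∈ A k := fun β => Set.mem_iUnion.mp (hAcover ▸ hXdom β)
      -- inner integral rewrite
      have hInner : ∀ α : Fin n_a,
          (∫ y in Xdom, K (S α) (X α) y * Phi A N (Function.update X α y) S)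
            = ∑ k : Fin m, (if cntZ (Function.update (fun β => cell A (X β)) α k) S = N
                then (1:ℝ) else 0) * ∫ y in A k, K (S α) (X α) y := by
        intro α
        have hKi : Integrable (fun y => K (S α) (X α) y) (volume.restrict Xdom) :=
          hX α (S α) (hXdom α)
        have h1 : Set.EqOn (fun y => K (S α) (X α) y * Phi A N (Function.update X α y) S)
            (fun y => ∑ k : Fin m, (A k).indicator (fun _ => (1:ℝ)) y *
              ((if cntZ (Function.update (fun β => cell A (X β)) α k) S = N then (1:ℝ) else 0) *
                K (S α) (X α) y)) Xdom := by
          intro y hy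
          have hyk : ∃ k, y ∈ A k := Set.mem_iUnion.mp (hAcover ▸ hy)
          have hXk' : ∀ β, ∃ k, Function.update X α y β ∈ A k := by
            intro β
            rcases eq_or_ne β α with rfl | hβ
            · rw [Function.update_self]; exact hyk
            · rw [Function.update_of_ne hβ]; exact hXk β
          simp only []
          rw [Phi_eq_cnt hAdisj hXk']
          have hcell : (fun β => cell A (Function.update X α y β))
              = Function.update (fun β => cell A (X β)) α (cell A y) := by
            funext β
            rcases eq_or_ne β α with rfl | hβ
            · rw [Function.update_self, Function.update_self]
            · rw [Function.update_of_ne hβ, Function.update_of_ne hβ]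
          rw [hcell]
          have hind : ∀ k, (A k).indicator (fun _ => (1:ℝ)) y
              = if cell A y = k then 1 else 0 := by
            intro k
            split_ifs with h
            · exact Set.indicator_of_mem (h ▸ cell_mem hyk) _
            · exact Set.indicator_of_notMem
                (fun hmem => h ((mem_iff_cell hAdisj hyk k).mp hmem)) _
          rw [Finset.sum_congr rfl (fun k _ => by rw [hind k])]
          have hsummand : ∀ k : Fin m, (if cell A y = k then (1:ℝ) else 0) *
              ((if cntZ (Function.update (fun β => cell A (X β)) α k) S = N then (1:ℝ) else 0) *
                K (S α) (X α) y)
              = if k = cell A y then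
                  ((if cntZ (Function.update (fun β => cell A (X β)) α k) S = N
                    then (1:ℝ) else 0) * K (S α) (X α) y) else 0 := by
            intro k
            by_cases h : cell A y = k
            · rw [if_pos h, if_pos h.symm, one_mul]
            · rw [if_neg h, zero_mul, if_neg (fun hh : k = cell A y => h hh.symm)]
          rw [Finset.sum_congr rfl (fun k _ => hsummand k),
            Finset.sum_ite_eq' Finset.univ (cell A y), if_pos (Finset.mem_univ _)]
          rw [mul_comm]
        rw [setIntegral_congr_fun hXmeas h1]
        have hintk : ∀ k : Fin m, Integrable (fun y => (A k).indicator (fun _ => (1:ℝ)) y *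
            ((if cntZ (Function.update (fun β => cell A (X β)) α k) S = N then (1:ℝ) else 0) *
              K (S α) (X α) y)) (volume.restrict Xdom) := by
          intro k
          have heqf : (fun y => (A k).indicator (fun _ => (1:ℝ)) y *
              ((if cntZ (Function.update (fun β => cell A (X β)) α k) S = N then (1:ℝ) else 0) *
                K (S α) (X α) y))
              = (A k).indicator (fun y =>
                  (if cntZ (Function.update (fun β => cell A (X β)) α k) S = N then (1:ℝ) else 0) *
                    K (S α) (X α) y) := by
            funext y
            by_cases hy : y ∈ A k
            · rw [Set.indicator_of_mem hy, Set.indicator_of_mem hy, one_mul]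
            · rw [Set.indicator_of_notMem hy, Set.indicator_of_notMem hy, zero_mul]
          rw [heqf]
          exact (hKi.const_mul _).indicator (hAmeas k)
        rw [integral_finset_sum Finset.univ (fun k _ => hintk k)]
        refine Finset.sum_congr rfl fun k _ => ?_
        have heqf : (fun y => (A k).indicator (fun _ => (1:ℝ)) y *
            ((if cntZ (Function.update (fun β => cell A (X β)) α k) S = N then (1:ℝ) else 0) *
              K (S α) (X α) y))
            = (A k).indicator (fun y =>
                (if cntZ (Function.update (fun β => cell A (X β)) α k) S = N then (1:ℝ) else 0) *
                  K (S α) (X α) y) := by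
          funext y
          by_cases hy : y ∈ A k
          · rw [Set.indicator_of_mem hy, Set.indicator_of_mem hy, one_mul]
          · rw [Set.indicator_of_notMem hy, Set.indicator_of_notMem hy, zero_mul]
        rw [heqf, setIntegral_indicator (hAmeas k),
          Set.inter_eq_self_of_subset_right (hsub k), integral_const_mul]
      -- assemble the pointwise identity
      rw [Phi_eq_cnt hAdisj hXk, Lop]
      rw [Finset.sum_congr rfl (fun α _ => hInner α)]
      -- now both sides are finite sums
      rw [Finset.mul_sum]
      refine Finset.sum_congr rfl fun α _ => ?_
      rw [Finset.sum_comm (γ := Fin n_a → Fin m)]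
      rw [Finset.mul_sum]
      refine Finset.sum_congr rfl fun k _ => ?_
      rw [Finset.sum_congr rfl (fun c _ => by rw [prod_Fc hAdisj hXk α c k])]
      simp only [mul_ite, mul_one, mul_zero, ite_mul, zero_mul, one_mul]
      rw [Finset.sum_ite_eq' Finset.univ (fun β => cell A (X β))]
      rw [if_pos (Finset.mem_univ _)]
    · rw [Set.indicator_of_notMem hXmem]
      obtain ⟨β₀, hβ₀⟩ : ∃ β, X β ∉ Xdom := by
        by_contra hall
        push_neg at hall
        exact hXmem fun β _ => hall β
      symm
      refine Finset.sum_eq_zero fun α _ => Finset.sum_eq_zero fun c _ =>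
        Finset.sum_eq_zero fun k _ => ?_
      have : Fc A K S α c k β₀ (X β₀) = 0 := by
        rw [Fc, Set.indicator_of_notMem (fun hmem => hβ₀ (hsub (c β₀) hmem)), zero_mul]
      rw [Finset.prod_eq_zero (Finset.mem_univ β₀) this, mul_zero, mul_zero]
  rw [hcong]
  -- Step B : integrate term by term
  have hint_term : ∀ (α : Fin n_a) (c : Fin n_a → Fin m) (k : Fin m),
      Integrable (fun X : Fin n_a → E d => ∏ β, Fc A K S α c k β (X β)) :=
    fun α c k => Integrable.fintype_prod fun β => integrable_Fc hXcomp hAmeas hsub hKint S α c k β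
  rw [integral_finset_sum Finset.univ (fun α _ => integrable_finset_sum _ fun c _ =>
    integrable_finset_sum _ fun k _ => ((hint_term α c k).const_mul _).const_mul _)]
  refine Finset.sum_congr rfl fun α _ => ?_
  rw [integral_finset_sum Finset.univ (fun c _ =>
    integrable_finset_sum _ fun k _ => ((hint_term α c k).const_mul _).const_mul _)]
  refine Finset.sum_congr rfl fun c _ => ?_
  rw [integral_finset_sum Finset.univ (fun k _ => ((hint_term α c k).const_mul _).const_mul _)]
  refine Finset.sum_congr rfl fun k _ => ?_
  rw [integral_const_mul, integral_const_mul]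
  congr 1
  congr 1
  rw [integral_fintype_prod_volume_eq_prod (fun β x => Fc A K S α c k β x)]
  rw [← Finset.mul_prod_erase Finset.univ (fun β => ∫ x, Fc A K S α c k β x)
    (Finset.mem_univ α)]
  rw [mul_comm]
  congr 1
  · refine Finset.prod_congr rfl fun β hβ => ?_
    rw [Fc_of_ne (Finset.ne_of_mem_erase hβ), integral_indA (hAmeas (c β))]
  · rw [Fc_self, integral_indicator (hAmeas (c α))]

end AuxNum2


section AuxSum
variable {m n_s n_a : ℕ}

def updEquiv (α : Fin n_a) : ((Fin n_a → Fin m) × Fin m) ≃ ((Fin n_a → Fin m) × Fin m) where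
  toFun p := (Function.update p.1 α p.2, p.1 α)
  invFun p := (Function.update p.1 α p.2, p.1 α)
  left_inv p := by
    refine Prod.ext ?_ ?_ <;>
      simp [Function.update_idem, Function.update_eq_self, Function.update_self]
  right_inv p := by
    refine Prod.ext ?_ ?_ <;>
      simp [Function.update_idem, Function.update_eq_self, Function.update_self]

lemma sum_inv (α : Fin n_a) (F : ((Fin n_a → Fin m) × Fin m) → ℝ) :
    ∑ c : Fin n_a → Fin m, ∑ k' : Fin m, F (c, k')
      = ∑ c : Fin n_a → Fin m, ∑ k' : Fin m, F (Function.update c α k', c α) := by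
  calc ∑ c : Fin n_a → Fin m, ∑ k' : Fin m, F (c, k')
      = ∑ p : (Fin n_a → Fin m) × Fin m, F p := (Fintype.sum_prod_type _).symm
    _ = ∑ p : (Fin n_a → Fin m) × Fin m, F (updEquiv α p) :=
        (Equiv.sum_comp (updEquiv α) F).symm
    _ = ∑ c : Fin n_a → Fin m, ∑ k' : Fin m, F (Function.update c α k', c α) :=
        Fintype.sum_prod_type _

lemma sum_boole_cnt (c : Fin n_a → Fin m) (S : Fin n_a → Fin n_s) (i : Fin n_s) (k : Fin m) :
    ∑ α : Fin n_a, (if c α = k ∧ S α = i then (1:ℝ) else 0) = (cnt c S i k : ℝ) := by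
  rw [cnt, Finset.sum_boole]

variable (w : Fin m → ℝ) (lamv : Fin n_s → Fin m → Fin m → ℝ) (S : Fin n_a → Fin n_s)

lemma sumA {M N : Fin n_s → Fin m → ℤ} {i : Fin n_s} {k l : Fin m} (hkl : k ≠ l)
    (hM : M = N + Emat i l - Emat i k) :
    (∑ α : Fin n_a, ∑ c : Fin n_a → Fin m, ∑ k' : Fin m,
        (if cntZ c S = M then (1:ℝ) else 0) *
          ((if cntZ (Function.update c α k') S = N then (1:ℝ) else 0) *
            ((∏ β ∈ Finset.univ.erase α, w (c β)) * (lamv (S α) k' (c α) * w k'))))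
      = lamv i k l * (((N i k : ℤ) : ℝ) *
          ∑ c : Fin n_a → Fin m, (if cntZ c S = N then (1:ℝ) else 0) * ∏ β, w (c β)) := by
  classical
  have hstep : ∀ (α : Fin n_a) (c : Fin n_a → Fin m) (k' : Fin m),
      (if cntZ (Function.update c α k') S = M then (1:ℝ) else 0) *
        ((if cntZ c S = N then (1:ℝ) else 0) *
          ((∏ β ∈ Finset.univ.erase α, w (c β)) * (lamv (S α) (c α) k' * w (c α))))
      = if k' = l then (if cntZ c S = N ∧ S α = i ∧ c α = k
          then lamv i k l * ∏ β, w (c β) else 0) else 0 := by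
    intro α c k'
    by_cases hN : cntZ c S = N
    · by_cases hMc : cntZ (Function.update c α k') S = M
      · have key : (Emat (S α) k' - Emat (S α) (c α) : Fin n_s → Fin m → ℤ)
            = Emat i l - Emat i k := by
          have h1 : cntZ (Function.update c α k') S - cntZ c S
              = Emat (S α) k' - Emat (S α) (c α) := by
            rw [cntZ_update]; abel
          rw [hMc, hN, hM] at h1
          rw [← h1]; abel
        obtain ⟨hi, hl, hk⟩ := (Emat_sub_eq_iff hkl).mp key
        rw [if_pos hMc, if_pos hN, if_pos hl, if_pos ⟨hN, hi, hk⟩]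
        rw [hi, hk, hl, ← Finset.mul_prod_erase Finset.univ (fun β => w (c β))
          (Finset.mem_univ α), hk]
        ring
      · rw [if_neg hMc, zero_mul]
        symm
        split_ifs with h1 h2
        · exfalso
          apply hMc
          rw [cntZ_update, hN, h2.2.1, h2.2.2, h1, hM]
          abel
        · rfl
        · rfl
    · rw [if_neg hN, zero_mul, mul_zero]
      symm
      split_ifs with h1 h2
      · exact absurd h2.1 hN
      · rfl
      · rfl
  have hmain : ∀ α : Fin n_a, (∑ c : Fin n_a → Fin m, ∑ k' : Fin m,
      (if cntZ c S = M then (1:ℝ) else 0) *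
        ((if cntZ (Function.update c α k') S = N then (1:ℝ) else 0) *
          ((∏ β ∈ Finset.univ.erase α, w (c β)) * (lamv (S α) k' (c α) * w k'))))
      = ∑ c : Fin n_a → Fin m, (if cntZ c S = N ∧ S α = i ∧ c α = k
          then lamv i k l * ∏ β, w (c β) else 0) := by
    intro α
    rw [sum_inv α (fun p => (if cntZ p.1 S = M then (1:ℝ) else 0) *
      ((if cntZ (Function.update p.1 α p.2) S = N then (1:ℝ) else 0) *
        ((∏ β ∈ Finset.univ.erase α, w (p.1 β)) * (lamv (S α) p.2 (p.1 α) * w p.2))))]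
    refine Finset.sum_congr rfl fun c _ => ?_
    have hterm : ∀ k' : Fin m,
        (if cntZ (Function.update c α k') S = M then (1:ℝ) else 0) *
          ((if cntZ (Function.update (Function.update c α k') α (c α)) S = N then (1:ℝ) else 0) *
            ((∏ β ∈ Finset.univ.erase α, w (Function.update c α k' β)) *
              (lamv (S α) (c α) (Function.update c α k' α) * w (c α))))
        = if k' = l then (if cntZ c S = N ∧ S α = i ∧ c α = k
            then lamv i k l * ∏ β, w (c β) else 0) else 0 := by
      intro k'
      have e1 : Function.update (Function.update c α k') α (c α) = c := by
        rw [Function.update_idem, Function.update_eq_self]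
      have e2 : (∏ β ∈ Finset.univ.erase α, w (Function.update c α k' β))
          = ∏ β ∈ Finset.univ.erase α, w (c β) :=
        Finset.prod_congr rfl fun β hβ => by
          rw [Function.update_of_ne (Finset.ne_of_mem_erase hβ)]
      rw [e1, e2, Function.update_self]
      exact hstep α c k'
    rw [Finset.sum_congr rfl fun k' _ => hterm k']
    rw [Finset.sum_ite_eq' Finset.univ l, if_pos (Finset.mem_univ l)]
  rw [Finset.sum_congr rfl fun α _ => hmain α]
  rw [Finset.sum_comm]
  have hR : lamv i k l * (((N i k : ℤ) : ℝ) *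
        ∑ c : Fin n_a → Fin m, (if cntZ c S = N then (1:ℝ) else 0) * ∏ β, w (c β))
      = ∑ c : Fin n_a → Fin m, (if cntZ c S = N
          then lamv i k l * (((N i k : ℤ) : ℝ) * ∏ β, w (c β)) else 0) := by
    rw [Finset.mul_sum, Finset.mul_sum]
    refine Finset.sum_congr rfl fun c _ => ?_
    split_ifs with h
    · ring
    · ring
  rw [hR]
  refine Finset.sum_congr rfl fun c _ => ?_
  by_cases hc : cntZ c S = N
  · have hval : ∀ α : Fin n_a, (if cntZ c S = N ∧ S α = i ∧ c α = k
        then lamv i k l * ∏ β, w (c β) else 0)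
        = (if c α = k ∧ S α = i then (1:ℝ) else 0) * (lamv i k l * ∏ β, w (c β)) := by
      intro α
      by_cases h : c α = k ∧ S α = i
      · rw [if_pos ⟨hc, h.2, h.1⟩, if_pos h, one_mul]
      · rw [if_neg (fun hh => h ⟨hh.2.2, hh.2.1⟩), if_neg h, zero_mul]
    rw [Finset.sum_congr rfl fun α _ => hval α, ← Finset.sum_mul, sum_boole_cnt]
    have hNik : (cnt c S i k : ℝ) = ((N i k : ℤ) : ℝ) := by
      exact_mod_cast congrFun (congrFun hc i) k
    rw [hNik, if_pos hc]
    ring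
  · rw [if_neg hc]
    exact Finset.sum_eq_zero fun α _ => by rw [if_neg (fun hh => hc hh.1)]

lemma sumB {N : Fin n_s → Fin m → ℤ} :
    (∑ α : Fin n_a, ∑ c : Fin n_a → Fin m, ∑ k' : Fin m,
        (if cntZ c S = N then (1:ℝ) else 0) *
          ((if cntZ (Function.update c α k') S = N then (1:ℝ) else 0) *
            ((∏ β ∈ Finset.univ.erase α, w (c β)) * (lamv (S α) k' (c α) * w k'))))
      = (∑ i, ∑ k, lamv i k k * ((N i k : ℤ) : ℝ)) *
          ∑ c : Fin n_a → Fin m, (if cntZ c S = N then (1:ℝ) else 0) * ∏ β, w (c β) := by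
  classical
  have hstep : ∀ (α : Fin n_a) (c : Fin n_a → Fin m) (k' : Fin m),
      (if cntZ (Function.update c α k') S = N then (1:ℝ) else 0) *
        ((if cntZ c S = N then (1:ℝ) else 0) *
          ((∏ β ∈ Finset.univ.erase α, w (c β)) * (lamv (S α) (c α) k' * w (c α))))
      = if k' = c α then (if cntZ c S = N
          then lamv (S α) (c α) (c α) * ∏ β, w (c β) else 0) else 0 := by
    intro α c k'
    by_cases hN : cntZ c S = N
    · by_cases hMc : cntZ (Function.update c α k') S = N
      · have key : (Emat (S α) k' : Fin n_s → Fin m → ℤ) = Emat (S α) (c α) := by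
          have h1 : cntZ (Function.update c α k') S - cntZ c S
              = Emat (S α) k' - Emat (S α) (c α) := by
            rw [cntZ_update]; abel
          rw [hMc, hN, sub_self] at h1
          have h2 := h1.symm
          rw [sub_eq_zero] at h2
          exact h2
        have hk' : k' = c α := Emat_eq_iff.mp key
        rw [if_pos hMc, if_pos hN, if_pos hk', if_pos hN, hk',
          ← Finset.mul_prod_erase Finset.univ (fun β => w (c β)) (Finset.mem_univ α)]
        ring
      · rw [if_neg hMc, zero_mul, if_pos hN]
        by_cases h1 : k' = c α
        · exfalso
          apply hMc
          rw [h1, Function.update_eq_self]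
          exact hN
        · rw [if_neg h1]
    · rw [if_neg hN, zero_mul, mul_zero, if_neg hN, ite_self]
  have hmain : ∀ α : Fin n_a, (∑ c : Fin n_a → Fin m, ∑ k' : Fin m,
      (if cntZ c S = N then (1:ℝ) else 0) *
        ((if cntZ (Function.update c α k') S = N then (1:ℝ) else 0) *
          ((∏ β ∈ Finset.univ.erase α, w (c β)) * (lamv (S α) k' (c α) * w k'))))
      = ∑ c : Fin n_a → Fin m, (if cntZ c S = N
          then lamv (S α) (c α) (c α) * ∏ β, w (c β) else 0) := by
    intro α
    rw [sum_inv α (fun p => (if cntZ p.1 S = N then (1:ℝ) else 0) *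
      ((if cntZ (Function.update p.1 α p.2) S = N then (1:ℝ) else 0) *
        ((∏ β ∈ Finset.univ.erase α, w (p.1 β)) * (lamv (S α) p.2 (p.1 α) * w p.2))))]
    refine Finset.sum_congr rfl fun c _ => ?_
    have hterm : ∀ k' : Fin m,
        (if cntZ (Function.update c α k') S = N then (1:ℝ) else 0) *
          ((if cntZ (Function.update (Function.update c α k') α (c α)) S = N then (1:ℝ) else 0) *
            ((∏ β ∈ Finset.univ.erase α, w (Function.update c α k' β)) *
              (lamv (S α) (c α) (Function.update c α k' α) * w (c α))))
        = if k' = c α then (if cntZ c S = N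
            then lamv (S α) (c α) (c α) * ∏ β, w (c β) else 0) else 0 := by
      intro k'
      have e1 : Function.update (Function.update c α k') α (c α) = c := by
        rw [Function.update_idem, Function.update_eq_self]
      have e2 : (∏ β ∈ Finset.univ.erase α, w (Function.update c α k' β))
          = ∏ β ∈ Finset.univ.erase α, w (c β) :=
        Finset.prod_congr rfl fun β hβ => by
          rw [Function.update_of_ne (Finset.ne_of_mem_erase hβ)]
      rw [e1, e2, Function.update_self]
      exact hstep α c k'
    rw [Finset.sum_congr rfl fun k' _ => hterm k']
    rw [Finset.sum_ite_eq' Finset.univ (c α), if_pos (Finset.mem_univ (c α))]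
  rw [Finset.sum_congr rfl fun α _ => hmain α]
  rw [Finset.sum_comm]
  have hexp : ∀ (c : Fin n_a → Fin m) (α : Fin n_a), lamv (S α) (c α) (c α)
      = ∑ i, ∑ k, (if c α = k ∧ S α = i then (1:ℝ) else 0) * lamv i k k := by
    intro c α
    have hterm2 : ∀ (i : Fin n_s) (k : Fin m),
        (if c α = k ∧ S α = i then (1:ℝ) else 0) * lamv i k k
        = if k = c α then (if i = S α then lamv i k k else 0) else 0 := by
      intro i k
      by_cases h1 : k = c α
      · subst h1
        by_cases h2 : i = S α
        · subst h2
          rw [if_pos ⟨rfl, rfl⟩, if_pos rfl, if_pos rfl, one_mul]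
        · rw [if_neg (fun hh => h2 hh.2.symm), if_pos rfl, if_neg h2, zero_mul]
      · rw [if_neg (fun hh => h1 hh.1.symm), if_neg h1, zero_mul]
    rw [Finset.sum_congr rfl fun i _ => Finset.sum_congr rfl fun k _ => hterm2 i k]
    rw [Finset.sum_congr rfl fun i _ => by
      rw [Finset.sum_ite_eq' Finset.univ (c α) (fun k => if i = S α then lamv i k k else 0),
        if_pos (Finset.mem_univ (c α))]]
    rw [Finset.sum_ite_eq' Finset.univ (S α) (fun i => lamv i (c α) (c α)),
      if_pos (Finset.mem_univ (S α))]
  have hR : (∑ i, ∑ k, lamv i k k * ((N i k : ℤ) : ℝ)) *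
        ∑ c : Fin n_a → Fin m, (if cntZ c S = N then (1:ℝ) else 0) * ∏ β, w (c β)
      = ∑ c : Fin n_a → Fin m, (if cntZ c S = N
          then (∑ i, ∑ k, lamv i k k * ((N i k : ℤ) : ℝ)) * ∏ β, w (c β) else 0) := by
    rw [Finset.mul_sum]
    refine Finset.sum_congr rfl fun c _ => ?_
    split_ifs with h
    · ring
    · ring
  rw [hR]
  refine Finset.sum_congr rfl fun c _ => ?_
  by_cases hc : cntZ c S = N
  · rw [if_pos hc]
    rw [Finset.sum_congr rfl fun α _ => if_pos hc]
    rw [Finset.sum_congr rfl fun α _ => by rw [hexp c α, Finset.sum_mul]]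
    rw [Finset.sum_congr rfl fun α _ => Finset.sum_congr rfl fun i _ => by
      rw [Finset.sum_mul]]
    rw [Finset.sum_comm]
    rw [Finset.sum_mul]
    refine Finset.sum_congr rfl fun i _ => ?_
    rw [Finset.sum_comm]
    rw [Finset.sum_mul]
    refine Finset.sum_congr rfl fun k _ => ?_
    rw [Finset.sum_congr rfl fun α _ =>
      show (if c α = k ∧ S α = i then (1:ℝ) else 0) * lamv i k k * ∏ β, w (c β)
        = (if c α = k ∧ S α = i then (1:ℝ) else 0) * (lamv i k k * ∏ β, w (c β)) from by ring]
    rw [← Finset.sum_mul, sum_boole_cnt]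
    have hNik : (cnt c S i k : ℝ) = ((N i k : ℤ) : ℝ) := by
      exact_mod_cast congrFun (congrFun hc i) k
    rw [hNik]
    ring
  · rw [if_neg hc]
    exact Finset.sum_eq_zero fun α _ => by rw [if_neg hc]

lemma sumC {M N : Fin n_s → Fin m → ℤ} (hMN : M ≠ N)
    (hno : ¬∃ (i : Fin n_s) (k l : Fin m), k ≠ l ∧ M = N + Emat i l - Emat i k)
    (R : Fin n_a → (Fin n_a → Fin m) → Fin m → ℝ) :
    (∑ α : Fin n_a, ∑ c : Fin n_a → Fin m, ∑ k' : Fin m,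
        (if cntZ c S = M then (1:ℝ) else 0) *
          ((if cntZ (Function.update c α k') S = N then (1:ℝ) else 0) * R α c k')) = 0 := by
  refine Finset.sum_eq_zero fun α _ => Finset.sum_eq_zero fun c _ =>
    Finset.sum_eq_zero fun k' _ => ?_
  by_cases h1 : cntZ c S = M
  · by_cases h2 : cntZ (Function.update c α k') S = N
    · exfalso
      have h3 : M = N + Emat (S α) (c α) - Emat (S α) k' := by
        rw [← h1, ← h2, cntZ_update]
        abel
      rcases eq_or_ne (c α) k' with he | hne
      · apply hMN
        rw [h3, he]
        abel
      · exact hno ⟨S α, k', c α, fun hh => hne hh.symm, h3⟩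
    · rw [if_neg h2, zero_mul, mul_zero]
  · rw [if_neg h1, zero_mul]

end AuxSum

/-- assuming mass conservation `∫_X ℓ_i(x,y) dx = 0` for a.e. `y ∈ X`,
the matrix representation `L̂_{NM} = ⟨Φ_M, L Φ_N⟩/⟨Φ_N, 𝟙⟩` of the projected movement
generator is: `λ_i^{(kl)} N_i^{(k)}` if `M = N + E_i^{(l)} − E_i^{(k)}` with `k ≠ l`;
`−∑_i ∑_{k ≠ l} λ_i^{(kl)} N_i^{(k)}` if `M = N`; and `0` otherwise. -/
theorem statement6 (d m n_s n_a : ℕ) (hns : 1 ≤ n_s) (hna : 1 ≤ n_a)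
    (Xdom : Set (E d)) (hXcomp : IsCompact Xdom) (hXpos : 0 < volume Xdom)
    (A : Fin m → Set (E d)) (hAmeas : ∀ k, MeasurableSet (A k))
    (hAdisj : Pairwise (Disjoint on A)) (hApos : ∀ k, 0 < volume (A k))
    (hAcover : (⋃ k, A k) = Xdom)
    (K : Fin n_s → E d → E d → ℝ)
    (hKint : ∀ i, IntegrableOn (fun q : E d × E d => K i q.1 q.2) (Xdom ×ˢ Xdom))
    (hmass : ∀ i, ∀ᵐ y ∂(volume.restrict Xdom), ∫ x in Xdom, K i x y = 0)
    (N M : Fin n_s → Fin m → ℤ)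
    (hN : N ∈ Mset n_s m n_a) (hM : M ∈ Mset n_s m n_a) :
    (∀ (i : Fin n_s) (k l : Fin m), k ≠ l → M = N + Emat i l - Emat i k →
      ip Xdom (Phi (n_a := n_a) A M) (Lop Xdom K (Phi A N))
          / ip Xdom (Phi (n_a := n_a) A N) (one d n_s n_a)
        = lam A K i k l * (N i k : ℝ)) ∧
    (ip Xdom (Phi (n_a := n_a) A N) (Lop Xdom K (Phi A N))
          / ip Xdom (Phi (n_a := n_a) A N) (one d n_s n_a)
        = -∑ i : Fin n_s, ∑ k : Fin m, ∑ l ∈ Finset.univ.erase k,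
            lam A K i k l * (N i k : ℝ)) ∧
    ((M ≠ N ∧ ¬∃ (i : Fin n_s) (k l : Fin m), k ≠ l ∧ M = N + Emat i l - Emat i k) →
      ip Xdom (Phi (n_a := n_a) A M) (Lop Xdom K (Phi A N))
          / ip Xdom (Phi (n_a := n_a) A N) (one d n_s n_a) = 0) := by
  classical
  have hXne : Xdom.Nonempty := nonempty_of_measure_ne_zero hXpos.ne'
  obtain ⟨x₀, hx₀⟩ := hXne
  obtain ⟨k₀, hk₀⟩ := Set.mem_iUnion.mp (hAcover ▸ hx₀)
  haveI : Nonempty (Fin m) := ⟨k₀⟩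
  have hsub : ∀ k, A k ⊆ Xdom := fun k => hAcover ▸ Set.subset_iUnion A k
  have hwpos : ∀ k, 0 < (volume (A k)).toReal := fun k => ENNReal.toReal_pos (hApos k).ne'
    (lt_of_le_of_lt (measure_mono (hsub k)) hXcomp.measure_lt_top).ne
  have hJ : ∀ (i : Fin n_s) (a b : Fin m), (∫ x in A b, ∫ y in A a, K i x y)
      = lam A K i a b * (volume (A a)).toReal := by
    intro i a b
    rw [lam, div_mul_cancel₀ _ (hwpos a).ne']
  have hCne : ((((volume Xdom).toReal * (n_s : ℝ)) ^ n_a)⁻¹ : ℝ) ≠ 0 := by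
    apply inv_ne_zero
    apply pow_ne_zero
    apply mul_ne_zero
    · exact (ENNReal.toReal_pos hXpos.ne' hXcomp.measure_lt_top.ne).ne'
    · have : 0 < n_s := by omega
      exact_mod_cast this.ne'
  have hden : ip Xdom (Phi (n_a := n_a) A N) (one d n_s n_a)
      = (((volume Xdom).toReal * (n_s : ℝ)) ^ n_a)⁻¹ *
          ∑ S : Fin n_a → Fin n_s, ∑ c : Fin n_a → Fin m,
            (if cntZ c S = N then (1:ℝ) else 0) * ∏ β, (volume (A (c β))).toReal := by
    rw [ip]
    congr 1
    exact Finset.sum_congr rfl fun S _ => den_integral hXcomp hAmeas hAdisj hAcover N S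
  have hDenpos : 0 < ∑ S : Fin n_a → Fin n_s, ∑ c : Fin n_a → Fin m,
      (if cntZ c S = N then (1:ℝ) else 0) * ∏ β, (volume (A (c β))).toReal := by
    obtain ⟨S₀, c₀, hc₀⟩ := exists_cnt (n_a := n_a) hN
    have hterm : ∀ (S : Fin n_a → Fin n_s) (c : Fin n_a → Fin m),
        0 ≤ (if cntZ c S = N then (1:ℝ) else 0) * ∏ β, (volume (A (c β))).toReal := by
      intro S c
      apply mul_nonneg
      · split_ifs <;> norm_num
      · exact Finset.prod_nonneg fun β _ => (hwpos (c β)).le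
    have hpos0 : 0 < (if cntZ c₀ S₀ = N then (1:ℝ) else 0) * ∏ β, (volume (A (c₀ β))).toReal := by
      rw [if_pos hc₀, one_mul]
      exact Finset.prod_pos fun β _ => hwpos (c₀ β)
    have hW0 : 0 < ∑ c : Fin n_a → Fin m,
        (if cntZ c S₀ = N then (1:ℝ) else 0) * ∏ β, (volume (A (c β))).toReal := by
      have hle := Finset.single_le_sum (fun c (_ : c ∈ Finset.univ) => hterm S₀ c)
        (Finset.mem_univ c₀)
      linarith
    have hle2 := Finset.single_le_sum
      (f := fun S : Fin n_a → Fin n_s => ∑ c : Fin n_a → Fin m,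
        (if cntZ c S = N then (1:ℝ) else 0) * ∏ β, (volume (A (c β))).toReal)
      (fun S _ => Finset.sum_nonneg fun c _ => hterm S c) (Finset.mem_univ S₀)
    linarith
  have hnum : ∀ M' : Fin n_s → Fin m → ℤ,
      ip Xdom (Phi (n_a := n_a) A M') (Lop Xdom K (Phi A N))
      = (((volume Xdom).toReal * (n_s : ℝ)) ^ n_a)⁻¹ *
          ∑ S : Fin n_a → Fin n_s, ∑ α : Fin n_a, ∑ c : Fin n_a → Fin m, ∑ k : Fin m,
            (if cntZ c S = M' then (1:ℝ) else 0) *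
              ((if cntZ (Function.update c α k) S = N then (1:ℝ) else 0) *
                ((∏ β ∈ Finset.univ.erase α, (volume (A (c β))).toReal) *
                  (lam A K (S α) k (c α) * (volume (A k)).toReal))) := by
    intro M'
    rw [ip]
    congr 1
    refine Finset.sum_congr rfl fun S _ => ?_
    rw [num_integral hXcomp hAmeas hAdisj hAcover hKint M' N S]
    exact Finset.sum_congr rfl fun α _ => Finset.sum_congr rfl fun c _ =>
      Finset.sum_congr rfl fun k _ => by rw [hJ (S α) k (c α)]
  refine ⟨?_, ?_, ?_⟩
  · intro i k l hkl hM
    rw [hnum M, hden]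
    rw [Finset.sum_congr rfl fun S _ =>
      sumA (fun k => (volume (A k)).toReal) (lam A K) S hkl hM]
    rw [← Finset.mul_sum, ← Finset.mul_sum]
    rw [mul_div_mul_left _ _ hCne]
    rw [mul_div_assoc, mul_div_assoc, div_self hDenpos.ne', mul_one]
  · rw [hnum N, hden]
    rw [Finset.sum_congr rfl fun S _ =>
      sumB (fun k => (volume (A k)).toReal) (lam A K) S (N := N)]
    rw [← Finset.mul_sum]
    rw [mul_div_mul_left _ _ hCne]
    rw [mul_div_assoc, div_self hDenpos.ne', mul_one]
    have hdiag : ∀ (i : Fin n_s) (k : Fin m),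
        lam A K i k k = -∑ l ∈ Finset.univ.erase k, lam A K i k l := by
      intro i k
      have h0 : ∑ l, lam A K i k l = 0 := by
        have hz := sum_intAA_eq_zero A hAmeas hAdisj hAcover (hKint i) (hmass i) k
        simp only [lam]
        rw [← Finset.sum_div, hz, zero_div]
      have h1 := Finset.add_sum_erase Finset.univ (fun l => lam A K i k l)
        (Finset.mem_univ k)
      rw [h0] at h1
      linarith
    have hpush : ∀ (i : Fin n_s) (k : Fin m), lam A K i k k * ((N i k : ℤ) : ℝ)
        = -∑ l ∈ Finset.univ.erase k, lam A K i k l * ((N i k : ℤ) : ℝ) := by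
      intro i k
      rw [hdiag i k, neg_mul, Finset.sum_mul]
    rw [Finset.sum_congr rfl fun i _ => Finset.sum_congr rfl fun k _ => hpush i k]
    rw [Finset.sum_congr rfl fun i (_ : i ∈ Finset.univ) => Finset.sum_neg_distrib
      (f := fun k => ∑ l ∈ Finset.univ.erase k, lam A K i k l * ((N i k : ℤ) : ℝ))]
    rw [Finset.sum_neg_distrib]
  · rintro ⟨hMN, hno⟩
    rw [hnum M, hden]
    rw [Finset.sum_congr rfl fun S _ => sumC S hMN hno
      (fun α c k => (∏ β ∈ Finset.univ.erase α, (volume (A (c β))).toReal) *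
        (lam A K (S α) k (c α) * (volume (A k)).toReal))]
    rw [Finset.sum_const_zero, mul_zero, zero_div]

end ABMFormal
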